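/- Adjacent interchange within T: With Xᵢ, Xⱼ independent three-point variables on {0,mᵢ,1} and {0,mⱼ,1} (probabilities pᵢ,qᵢ and pⱼ,qⱼ for middle and right points), both accepted at any positive value, the difference in expected reward between ordering Xᵢ before Xⱼ versus Xⱼ before Xᵢ (with fixed thresholds, common prefix L and suffix R) equals f(L)·(pⱼ+qⱼ)(pᵢmᵢ+qᵢ) − f(L)·(pᵢ+qᵢ)(pⱼmⱼ+qⱼ), which has the same sign as Eᵢ − Eⱼ where Eₖ = (mₖpₖ+qₖ)/(pₖ+qₖ). -/

import Mathlib

/-- Adjacent interchange within `T`: both `Xᵢ` and `Xⱼ` are accepted at any positive value.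
Comparing the fixed-threshold policy values of `(L, Xᵢ, Xⱼ, R)` and `(L, Xⱼ, Xᵢ, R)`, the
difference equals `fL·((pⱼ+qⱼ)(pᵢmᵢ+qᵢ) − (pᵢ+qᵢ)(pⱼmⱼ+qⱼ))`, which has the same sign as
`Eᵢ − Eⱼ` where `Eₖ = (mₖpₖ+qₖ)/(pₖ+qₖ)` (whenever `fL > 0`). -/
theorem stmt11 (fL EL fR ER pi qi pj qj mi mj : ℝ)
    (hfL0 : 0 ≤ fL) (hfL1 : fL ≤ 1) (hfR0 : 0 ≤ fR) (hfR1 : fR ≤ 1)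
    (hpi : 0 < pi) (hqi : 0 < qi) (hpqi : pi + qi < 1)
    (hpj : 0 < pj) (hqj : 0 < qj) (hpqj : pj + qj < 1)
    (hmi0 : 0 < mi) (hmi1 : mi < 1) (hmj0 : 0 < mj) (hmj1 : mj < 1)
    (Vij Vji Ei Ej : ℝ)
    (hVij : Vij = EL * (1 - fL) +
      fL * (pi * mi + qi + (1 - qi - pi) * (pj * mj + qj) +
        (1 - qi - pi) * (1 - qj - pj) * (ER * (1 - fR))))
    (hVji : Vji = EL * (1 - fL) +
      fL * (pj * mj + qj + (1 - qj - pj) * (pi * mi + qi) +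
        (1 - qj - pj) * (1 - qi - pi) * (ER * (1 - fR))))
    (hEi : Ei = (mi * pi + qi) / (pi + qi)) (hEj : Ej = (mj * pj + qj) / (pj + qj)) :
    Vij - Vji = fL * ((pj + qj) * (pi * mi + qi) - (pi + qi) * (pj * mj + qj)) ∧
      (0 < fL → (0 < Vij - Vji ↔ Ej < Ei) ∧ (Vij - Vji = 0 ↔ Ei = Ej)) := by
  have hi : 0 < pi + qi := by linarith
  have hj : 0 < pj + qj := by linarith
  have key : Vij - Vji = fL * ((pj + qj) * (pi * mi + qi) - (pi + qi) * (pj * mj + qj)) := by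
    subst hVij hVji; ring
  refine ⟨key, fun hfL => ?_⟩
  have hED : Ei - Ej = ((pj + qj) * (pi * mi + qi) - (pi + qi) * (pj * mj + qj)) /
      ((pi + qi) * (pj + qj)) := by
    subst hEi hEj; field_simp
  have hD : 0 < (pi + qi) * (pj + qj) := mul_pos hi hj
  set N := (pj + qj) * (pi * mi + qi) - (pi + qi) * (pj * mj + qj) with hN
  have hdiv : ∀ x : ℝ, (0 < x / ((pi + qi) * (pj + qj)) ↔ 0 < x) := by
    intro x; rw [div_pos_iff]
    constructor
    · rintro (⟨h, _⟩ | ⟨_, h⟩) <;> linarith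
    · intro h; exact Or.inl ⟨h, hD⟩
  have h1 : 0 < N ↔ Ej < Ei := by
    rw [show (Ej < Ei ↔ 0 < Ei - Ej) from sub_pos.symm, hED, hdiv]
  have h2 : N = 0 ↔ Ei = Ej := by
    rw [show (Ei = Ej ↔ Ei - Ej = 0) from sub_eq_zero.symm, hED,
      div_eq_zero_iff]
    constructor
    · intro h; exact Or.inl h
    · rintro (h | h)
      · exact h
      · exact absurd h (ne_of_gt hD)
  constructor
  · rw [key, ← h1]
    exact ⟨fun h => by nlinarith, fun h => mul_pos hfL h⟩
  · rw [key, ← h2, mul_eq_zero]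
    constructor
    · rintro (h | h)
      · exact absurd h (ne_of_gt hfL)
      · exact h
    · intro h; exact Or.inr h
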